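/- Let Λ be a square domain, β > 0, and let h₁, h₂ : ∂Λ → ℤ satisfy h₁(j) ≤ h₂(j) for all j ∈ ∂Λ. Then P^IV_{β,Λ,h₁} is stochastically dominated by P^IV_{β,Λ,h₂}: for every bounded function g : ℤ^Λ → ℝ that is increasing in each coordinate (with respect to the pointwise order), Σ_m P^IV_{β,Λ,h₁}(m)·g(m) ≤ Σ_m P^IV_{β,Λ,h₂}(m)·g(m). -/

import Mathlib

open scoped BigOperators
open MeasureTheory

noncomputable section

namespace IVGFF

attribute [local instance] Classical.propDecidable

/-- Vertices of the square lattice. -/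
abbrev V : Type := ℤ × ℤ

/-- The square box with corner `c` and side-length `L`. -/
def box (c : V) (L : ℕ) : Finset V :=
  (Finset.Icc c.1 (c.1 + (L : ℤ) - 1)) ×ˢ (Finset.Icc c.2 (c.2 + (L : ℤ) - 1))

/-- The boundary of the box with corner `c` and side-length `L`. -/
def bdry (c : V) (L : ℕ) : Finset V :=
  (box c L).filter fun j =>
    j.1 = c.1 ∨ j.1 = c.1 + (L : ℤ) - 1 ∨ j.2 = c.2 ∨ j.2 = c.2 + (L : ℤ) - 1

/-- The interior of the box with corner `c` and side-length `L`. -/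
def intr (c : V) (L : ℕ) : Finset V := box c L \ bdry c L

/-- Adjacency in the square lattice: `ℓ¹`-distance one. -/
def adj (j l : V) : Prop := |j.1 - l.1| + |j.2 - l.2| = 1

/-- The edges of the box (each edge appearing once, in a fixed orientation). -/
def edges (c : V) (L : ℕ) : Finset (V × V) :=
  ((box c L) ×ˢ (box c L)).filter fun p =>
    adj p.1 p.2 ∧ (p.1.1 < p.2.1 ∨ (p.1.1 = p.2.1 ∧ p.1.2 < p.2.2))

/-- Graph distance in the box graph, which coincides with `ℓ¹`-distance. -/
def gdist (j l : V) : ℕ := (|j.1 - l.1| + |j.2 - l.2|).toNat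

/-- Distance between two finite sets of vertices. -/
def distFS (A B : Finset V) : ℕ := sInf {n : ℕ | ∃ j ∈ A, ∃ l ∈ B, gdist j l = n}

/-- Inner product `⟨f, g⟩ = Σ_{j ∈ Λ} f_j g_j` of real fields. -/
def dot (c : V) (L : ℕ) (f g : V → ℝ) : ℝ := ∑ j ∈ box c L, f j * g j

/-- Inner product of an integer field with a real field. -/
def dotI (c : V) (L : ℕ) (m : V → ℤ) (f : V → ℝ) : ℝ := ∑ j ∈ box c L, (m j : ℝ) * f j

/-- The graph Laplacian `(Δ_Λ f)_j = Σ_{l ∼ j} (f_l − f_j)`. -/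
def lap (c : V) (L : ℕ) (f : V → ℝ) : V → ℝ :=
  fun j => ∑ l ∈ (box c L).filter (fun l => adj j l), (f l - f j)

/-- Dirichlet energy `Σ_{j∼l} (g_j − g_l)²` for integer fields. -/
def energyI (c : V) (L : ℕ) (g : V → ℤ) : ℝ :=
  ∑ p ∈ edges c L, ((g p.1 : ℝ) - (g p.2 : ℝ)) ^ 2

/-- Dirichlet energy `Σ_{j∼l} (φ_j − φ_l)²` for real fields. -/
def energyR (c : V) (L : ℕ) (φ : V → ℝ) : ℝ :=
  ∑ p ∈ edges c L, (φ p.1 - φ p.2) ^ 2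

/-- Integer-valued configurations with boundary condition `h` (extended by `0` off the box). -/
def ivConfigs (c : V) (L : ℕ) (h : V → ℤ) : Set (V → ℤ) :=
  {g | (∀ j ∈ bdry c L, g j = h j) ∧ ∀ j, j ∉ box c L → g j = 0}

/-- The IV-GFF Boltzmann weight. -/
def ivWeight (c : V) (L : ℕ) (β : ℝ) (g : V → ℤ) : ℝ :=
  Real.exp (-(β / 2) * energyI c L g)

/-- Partition function of the IV-GFF. -/
def ivZ (c : V) (L : ℕ) (β : ℝ) (h : V → ℤ) : ℝ :=
  ∑' g : ↥(ivConfigs c L h), ivWeight c L β g.1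

/-- Probability of an event under the IV-GFF `P^IV_{β,Λ,h}`. -/
def ivProb (c : V) (L : ℕ) (β : ℝ) (h : V → ℤ) (A : Set (V → ℤ)) : ℝ :=
  (∑' g : ↥(ivConfigs c L h ∩ A), ivWeight c L β g.1) / ivZ c L β h

/-- Expectation under the IV-GFF `E^IV_{β,Λ,h}`. -/
def ivExp (c : V) (L : ℕ) (β : ℝ) (h : V → ℤ) (F : (V → ℤ) → ℝ) : ℝ :=
  (∑' g : ↥(ivConfigs c L h), ivWeight c L β g.1 * F g.1) / ivZ c L β h

/-- Probability under the symmetrized IV-GFF `P^{IV-Sym}_{β,Λ,h}`. -/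
def ivSymProb (c : V) (L : ℕ) (β : ℝ) (h : V → ℤ) (A : Set (V → ℤ)) : ℝ :=
  (ivProb c L β h A + ivProb c L β (fun j => -h j) A) / 2

/-- Expectation under the symmetrized IV-GFF `E^{IV-Sym}_{β,Λ,h}`. -/
def ivSymExp (c : V) (L : ℕ) (β : ℝ) (h : V → ℤ) (F : (V → ℤ) → ℝ) : ℝ :=
  (ivExp c L β h F + ivExp c L β (fun j => -h j) F) / 2

/-- Extension of interior values `x` by boundary values `h` (and by `0` off the box). -/
def extend (c : V) (L : ℕ) (h : V → ℝ) (x : ↥(intr c L) → ℝ) : V → ℝ :=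
  fun j => if hj : j ∈ intr c L then x ⟨j, hj⟩ else if j ∈ bdry c L then h j else 0

/-- Partition function of the (real-valued) GFF. -/
def gffZ (c : V) (L : ℕ) (β : ℝ) (h : V → ℝ) : ℝ :=
  ∫ x : ↥(intr c L) → ℝ, Real.exp (-(β / 2) * energyR c L (extend c L h x))

/-- Expectation under the GFF `E^GFF_{β,Λ,h}`. -/
def gffExp (c : V) (L : ℕ) (β : ℝ) (h : V → ℝ) (F : (V → ℝ) → ℝ) : ℝ :=
  (∫ x : ↥(intr c L) → ℝ,
      F (extend c L h x) * Real.exp (-(β / 2) * energyR c L (extend c L h x))) / gffZ c L β h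

/-- Expectation under the symmetrized GFF `E^{GFF-Sym}_{β,Λ,h}`. -/
def gffSymExp (c : V) (L : ℕ) (β : ℝ) (h : V → ℝ) (F : (V → ℝ) → ℝ) : ℝ :=
  (gffExp c L β h F + gffExp c L β (fun j => -h j) F) / 2

/-- Complex-valued expectation under the GFF. -/
def gffExpC (c : V) (L : ℕ) (β : ℝ) (h : V → ℝ) (F : (V → ℝ) → ℂ) : ℂ :=
  (∫ x : ↥(intr c L) → ℝ,
      F (extend c L h x) * (Real.exp (-(β / 2) * energyR c L (extend c L h x)) : ℂ)) /
    (gffZ c L β h : ℂ)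

/-- One-step transition kernel of the simple random walk on the box, killed at the boundary:
rate `1/4` from an interior vertex to each neighbour. -/
def rwKernel (c : V) (L : ℕ) (j k : V) : ℝ :=
  if j ∈ intr c L ∧ adj j k then 1 / 4 else 0

/-- `n`-step transition probabilities of the killed walk. -/
def rwIter (c : V) (L : ℕ) : ℕ → V → V → ℝ
  | 0 => fun j k => if j = k then 1 else 0
  | n + 1 => fun j k => ∑ m ∈ box c L, rwIter c L n j m * rwKernel c L m k

/-- The Green's function `G_Λ(j,l)`: expected occupation time of `l` (for `l` interior) by the
continuous-time simple random walk started at `j` and killed at `∂Λ`; each interior holding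
time has expectation `1/4`. -/
def green (c : V) (L : ℕ) (j l : V) : ℝ := (1 / 4) * ∑' n : ℕ, rwIter c L n j l

/-- The harmonic measure `Hm_Λ(j,l)`: for `l ∈ ∂Λ`, the probability that the walk started
at `j` first hits the boundary at `l`. -/
def harmMeas (c : V) (L : ℕ) (j l : V) : ℝ := ∑' n : ℕ, rwIter c L n j l

/-- A real, even, normalized trigonometric polynomial
`λ(x) = 1 + 2 Σ_{q=1}^N λ̂_q cos(qx)` with coefficients `coef` and degree `N`. -/
def trigPoly (coef : ℕ → ℝ) (N : ℕ) (x : ℝ) : ℝ :=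
  1 + 2 * ∑ q ∈ Finset.Icc 1 N, coef q * Real.cos ((q : ℝ) * x)

/-- `(Γ,η,θ)`-sub-Gaussian coefficients (at inverse temperature `β`). -/
def subGaussian (β Γ η θ : ℝ) (coef : ℕ → ℝ) : Prop :=
  ∀ q : ℕ, 1 ≤ q → |coef q| ≤ Γ * Real.exp ((η + θ / β) * (q : ℝ) ^ 2)

/-- The Fejér kernel `F_N(x) = 1 + Σ_{q=1}^{N−1} 2(1 − q/N) cos(qx)`. -/
def fejer (N : ℕ) (x : ℝ) : ℝ :=
  1 + ∑ q ∈ Finset.Icc 1 (N - 1), 2 * (1 - (q : ℝ) / (N : ℝ)) * Real.cos ((q : ℝ) * x)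

/-- The (finite) support of a charge density within the box. -/
def suppF (c : V) (L : ℕ) (ρ : V → ℤ) : Finset V := (box c L).filter fun j => ρ j ≠ 0

/-- `ρ` is a charge density on the box: nonempty support contained in the interior. -/
def IsDensity (c : V) (L : ℕ) (ρ : V → ℤ) : Prop :=
  (∃ j, ρ j ≠ 0) ∧ ∀ j, ρ j ≠ 0 → j ∈ intr c L

/-- The total charge `Q(ρ)`. -/
def Qcharge (c : V) (L : ℕ) (ρ : V → ℤ) : ℤ := ∑ j ∈ box c L, ρ j

/-- Diameter of a finite set of vertices in graph distance. -/
def diamF (s : Finset V) : ℕ := s.sup fun j => s.sup fun l => gdist j l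

/-- The modified diameter `d_Λ(ρ)`. -/
def dLam (c : V) (L : ℕ) (ρ : V → ℤ) : ℕ :=
  if Qcharge c L ρ ≠ 0 then
    max (diamF (suppF c L ρ)) (distFS (suppF c L ρ) (bdry c L))
  else diamF (suppF c L ρ)

/-- `‖ρ‖₂² = Σ_j ρ_j²`. -/
def norm2sq (c : V) (L : ℕ) (ρ : V → ℤ) : ℝ := ∑ j ∈ box c L, ((ρ j : ℝ)) ^ 2

/-- The `2^k × 2^k` square with corner `a`, intersected with the box. -/
def sqAt (c : V) (L k : ℕ) (a : V) : Finset V :=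
  (box c L).filter fun j =>
    j.1 - a.1 ∈ Finset.Icc (0 : ℤ) (2 ^ k - 1) ∧ j.2 - a.2 ∈ Finset.Icc (0 : ℤ) (2 ^ k - 1)

/-- `s` is a `2^k × 2^k` square in the box. -/
def IsSqr (c : V) (L k : ℕ) (s : Finset V) : Prop :=
  s.card = min (box c L).card (2 ^ (2 * k)) ∧ ∃ a ∈ box c L, s = sqAt c L k a

/-- `S` is a cover of the support of `ρ` by `2^k × 2^k` squares. -/
def IsCover (c : V) (L k : ℕ) (ρ : V → ℤ) (S : Finset (Finset V)) : Prop :=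
  (∀ s ∈ S, IsSqr c L k s) ∧ ∀ j ∈ suppF c L ρ, ∃ s ∈ S, j ∈ s

/-- `S` is a minimal cover of the support of `ρ` by `2^k × 2^k` squares. -/
def IsMinCover (c : V) (L k : ℕ) (ρ : V → ℤ) (S : Finset (Finset V)) : Prop :=
  IsCover c L k ρ S ∧ ∀ S' : Finset (Finset V), IsCover c L k ρ S' → S.card ≤ S'.card

/-- `n(ρ) = ⌈log₂(M d_Λ(ρ)^α)⌉` with `M = 2^16`. -/
def nIdx (c : V) (L : ℕ) (α : ℝ) (ρ : V → ℤ) : ℕ :=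
  ⌈Real.logb 2 ((2 : ℝ) ^ 16 * (dLam c L ρ : ℝ) ^ α)⌉₊

/-- The separated part `S_k^sep(ρ)` of a cover `S` at scale `k ≥ 1`, with `M = 2^16`. -/
def sepOf (c : V) (L k : ℕ) (α : ℝ) (ρ : V → ℤ) (S : Finset (Finset V)) : Finset (Finset V) :=
  if 1 < S.card then
    S.filter fun s => ∀ s' ∈ S, s' ≠ s →
      (2 : ℝ) * 2 ^ 16 * (2 : ℝ) ^ (α * ((k : ℝ) + 1)) ≤ (distFS s s' : ℝ)
  else if Qcharge c L ρ = 0 then ∅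
  else if 2 ^ (k + 1) ≤ distFS (suppF c L ρ) (bdry c L) then S else ∅

end IVGFF

namespace IVAux
open IVGFF Filter
open scoped FinsetFamily

attribute [local instance] Classical.propDecidable

variable {L : ℕ} {β : ℝ} {h h₁ h₂ : V → ℤ}

/-! ### Generic lemmas -/

lemma quad_max_min (a b c d : ℝ) :
    (max a b - max c d) ^ 2 + (min a b - min c d) ^ 2 ≤ (a - c) ^ 2 + (b - d) ^ 2 := by
  rcases le_total a b with h | h <;> rcases le_total c d with h' | h'
  · rw [max_eq_right h, max_eq_right h', min_eq_left h, min_eq_left h']; nlinarith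
  · rw [max_eq_right h, max_eq_left h', min_eq_left h, min_eq_right h']
    nlinarith [mul_nonneg (sub_nonneg.2 h) (sub_nonneg.2 h')]
  · rw [max_eq_left h, max_eq_right h', min_eq_right h, min_eq_left h']
    nlinarith [mul_nonneg (sub_nonneg.2 h) (sub_nonneg.2 h')]
  · rw [max_eq_left h, max_eq_left h', min_eq_right h, min_eq_right h']

lemma summable_exp_neg_sq {ε : ℝ} (hε : 0 < ε) (b : ℤ) :
    Summable fun d : ℤ => Real.exp (-(ε * ((d : ℝ) - (b : ℝ)) ^ 2)) := by
  have hnat : Summable fun n : ℕ => Real.exp (-(ε * ((n : ℝ)) ^ 2)) := by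
    refine Summable.of_nonneg_of_le (fun n => (Real.exp_pos _).le) (fun n => ?_)
      (summable_geometric_of_lt_one (Real.exp_pos (-ε)).le
        (by rw [Real.exp_lt_one_iff]; linarith))
    rw [← Real.exp_nat_mul, Real.exp_le_exp]
    have h2 : (n : ℝ) ≤ (n : ℝ) ^ 2 := by
      exact_mod_cast Nat.cast_le.2 (Nat.le_self_pow two_ne_zero n)
    nlinarith
  have base : Summable fun d : ℤ => Real.exp (-(ε * ((d : ℝ)) ^ 2)) := by
    refine Summable.of_nat_of_neg hnat ?_
    simpa using hnat
  have := (Equiv.subRight b).summable_iff.2 base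
  refine this.congr fun d => ?_
  simp only [Function.comp, Equiv.subRight_apply]
  push_cast
  ring_nf

lemma summable_pi_prod {ι : Type*} [Fintype ι] (ψ : ι → ℤ → ℝ)
    (h0 : ∀ i d, 0 ≤ ψ i d) (hs : ∀ i, Summable (ψ i)) :
    Summable fun x : ι → ℤ => ∏ i, ψ i (x i) := by
  classical
  refine summable_of_sum_le (c := ∏ i, ∑' d, ψ i d)
    (fun x => Finset.prod_nonneg fun i _ => h0 i (x i)) (fun u => ?_)
  calc ∑ x ∈ u, ∏ i, ψ i (x i)
      ≤ ∑ x ∈ Fintype.piFinset (fun i => u.image fun y => y i), ∏ i, ψ i (x i) := by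
        refine Finset.sum_le_sum_of_subset_of_nonneg (fun x hx => ?_)
          (fun x _ _ => Finset.prod_nonneg fun i _ => h0 i (x i))
        rw [Fintype.mem_piFinset]
        exact fun i => Finset.mem_image_of_mem _ hx
    _ = ∏ i, ∑ d ∈ u.image (fun y => y i), ψ i d := (Finset.prod_univ_sum _ _).symm
    _ ≤ ∏ i, ∑' d, ψ i d := by
        refine Finset.prod_le_prod (fun i _ => Finset.sum_nonneg fun d _ => h0 i d)
          (fun i _ => Summable.sum_le_tsum _ (fun d _ => h0 i d) (hs i))

lemma tsum_four_functions {α : Type*} [DistribLattice α] (f₁ f₂ f₃ f₄ : α → ℝ)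
    (h₁ : ∀ a, 0 ≤ f₁ a) (h₂ : ∀ a, 0 ≤ f₂ a) (h₃ : ∀ a, 0 ≤ f₃ a) (h₄ : ∀ a, 0 ≤ f₄ a)
    (hs₁ : Summable f₁) (hs₂ : Summable f₂) (hs₃ : Summable f₃) (hs₄ : Summable f₄)
    (h : ∀ a b, f₁ a * f₂ b ≤ f₃ (a ⊓ b) * f₄ (a ⊔ b)) :
    (∑' a, f₁ a) * ∑' a, f₂ a ≤ (∑' a, f₃ a) * ∑' a, f₄ a := by
  classical
  have T : Tendsto (fun s : Finset α => (∑ a ∈ s, f₁ a) * ∑ a ∈ s, f₂ a) atTop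
      (nhds ((∑' a, f₁ a) * ∑' a, f₂ a)) := Tendsto.mul hs₁.hasSum hs₂.hasSum
  refine le_of_tendsto' T fun s => ?_
  calc (∑ a ∈ s, f₁ a) * ∑ a ∈ s, f₂ a
      ≤ (∑ a ∈ s ⊼ s, f₃ a) * ∑ a ∈ s ⊻ s, f₄ a :=
        four_functions_theorem f₁ f₂ f₃ f₄ h₁ h₂ h₃ h₄ h s s
    _ ≤ (∑' a, f₃ a) * ∑' a, f₄ a := by
        refine mul_le_mul (Summable.sum_le_tsum _ (fun a _ => h₃ a) hs₃)
          (Summable.sum_le_tsum _ (fun a _ => h₄ a) hs₄)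
          (Finset.sum_nonneg fun a _ => h₄ a) (tsum_nonneg h₃)

/-! ### Membership lemmas -/

lemma mem_box_iff {j : V} :
    j ∈ box 0 L ↔ 0 ≤ j.1 ∧ j.1 ≤ (L : ℤ) - 1 ∧ 0 ≤ j.2 ∧ j.2 ≤ (L : ℤ) - 1 := by
  simp [box, Finset.mem_Icc, and_assoc]

lemma mem_bdry_iff {j : V} :
    j ∈ bdry 0 L ↔ (0 ≤ j.1 ∧ j.1 ≤ (L : ℤ) - 1 ∧ 0 ≤ j.2 ∧ j.2 ≤ (L : ℤ) - 1) ∧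
      (j.1 = 0 ∨ j.1 = (L : ℤ) - 1 ∨ j.2 = 0 ∨ j.2 = (L : ℤ) - 1) := by
  simp [bdry, Finset.mem_filter, mem_box_iff]

lemma mem_intr_iff {j : V} :
    j ∈ intr 0 L ↔ 1 ≤ j.1 ∧ j.1 ≤ (L : ℤ) - 2 ∧ 1 ≤ j.2 ∧ j.2 ≤ (L : ℤ) - 2 := by
  simp only [intr, Finset.mem_sdiff, mem_box_iff, mem_bdry_iff]
  omega

lemma pair_mem_box {a b : ℤ} (h1 : 0 ≤ a) (h2 : a ≤ (L : ℤ) - 1) (h3 : 0 ≤ b)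
    (h4 : b ≤ (L : ℤ) - 1) : ((a, b) : V) ∈ box 0 L := mem_box_iff.2 ⟨h1, h2, h3, h4⟩

lemma pair_mem_bdry_bot {a : ℤ} (hL : 0 < L) (h1 : 0 ≤ a) (h2 : a ≤ (L : ℤ) - 1) :
    ((a, (0 : ℤ)) : V) ∈ bdry 0 L :=
  mem_bdry_iff.2 ⟨⟨h1, h2, le_refl (0 : ℤ), (show (0 : ℤ) ≤ (L : ℤ) - 1 by omega)⟩,
    Or.inr (Or.inr (Or.inl rfl))⟩

lemma vert_edge_mem (hL : 2 < L) {a t : ℤ} (ha1 : 1 ≤ a) (ha2 : a ≤ (L : ℤ) - 2)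
    (ht0 : 0 ≤ t) (ht1 : t + 1 ≤ (L : ℤ) - 2) : ((a, t), (a, t + 1)) ∈ edges 0 L := by
  refine Finset.mem_filter.2 ⟨Finset.mem_product.2
    ⟨pair_mem_box (by omega) (by omega) (by omega) (by omega),
      pair_mem_box (by omega) (by omega) (by omega) (by omega)⟩, ?_,
        Or.inr ⟨rfl, lt_add_one t⟩⟩
  show |a - a| + |t - (t + 1)| = 1
  have h1 : t - (t + 1) = -1 := by ring
  rw [sub_self, h1]
  norm_num

/-! ### Configurations -/

def full (L : ℕ) (h : V → ℤ) (x : ↥(intr 0 L) → ℤ) : V → ℤ :=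
  fun j => if hj : j ∈ intr 0 L then x ⟨j, hj⟩ else if j ∈ bdry 0 L then h j else 0

lemma not_mem_intr_of_mem_bdry {j : V} (hj : j ∈ bdry 0 L) : j ∉ intr 0 L :=
  fun hin => (Finset.mem_sdiff.1 hin).2 hj

lemma full_apply_intr (h : V → ℤ) (x : ↥(intr 0 L) → ℤ) {j : V} (hj : j ∈ intr 0 L) :
    full L h x j = x ⟨j, hj⟩ := dif_pos hj

lemma full_apply_bdry (h : V → ℤ) (x : ↥(intr 0 L) → ℤ) {j : V} (hj : j ∈ bdry 0 L) :
    full L h x j = h j := by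
  rw [full, dif_neg (not_mem_intr_of_mem_bdry hj), if_pos hj]

lemma full_apply_out (h : V → ℤ) (x : ↥(intr 0 L) → ℤ) {j : V} (hj1 : j ∉ intr 0 L)
    (hj2 : j ∉ bdry 0 L) : full L h x j = 0 := by
  rw [full, dif_neg hj1, if_neg hj2]

lemma full_mem (h : V → ℤ) (x : ↥(intr 0 L) → ℤ) : full L h x ∈ ivConfigs 0 L h := by
  refine ⟨fun j hj => full_apply_bdry h x hj, fun j hj => ?_⟩
  exact full_apply_out h x (fun hin => hj (Finset.mem_sdiff.1 hin).1)
    (fun hin => hj (Finset.mem_filter.1 hin).1)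

def configEquiv (L : ℕ) (h : V → ℤ) : (↥(intr 0 L) → ℤ) ≃ ↥(ivConfigs 0 L h) where
  toFun x := ⟨full L h x, full_mem h x⟩
  invFun g j := g.1 j.1
  left_inv x := by
    funext j
    show full L h x j.1 = x j
    rw [full_apply_intr h x j.2]
  right_inv g := by
    apply Subtype.ext
    funext j
    show full L h (fun i => g.1 i.1) j = g.1 j
    by_cases hj : j ∈ intr 0 L
    · exact full_apply_intr _ _ hj
    · by_cases hb : j ∈ bdry 0 L
      · rw [full_apply_bdry _ _ hb, g.2.1 j hb]
      · rw [full_apply_out _ _ hj hb,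
          g.2.2 j (fun hbox => hj (Finset.mem_sdiff.2 ⟨hbox, hb⟩))]

def W (L : ℕ) (β : ℝ) (h : V → ℤ) (x : ↥(intr 0 L) → ℤ) : ℝ := ivWeight 0 L β (full L h x)

lemma W_pos (x : ↥(intr 0 L) → ℤ) : 0 < W L β h x := Real.exp_pos _

lemma ivZ_eq : ivZ 0 L β h = ∑' x : ↥(intr 0 L) → ℤ, W L β h x :=
  ((configEquiv L h).tsum_eq fun g : ↥(ivConfigs 0 L h) => ivWeight 0 L β g.1).symm

lemma ivExp_eq (F : (V → ℤ) → ℝ) : ivExp 0 L β h F =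
    (∑' x : ↥(intr 0 L) → ℤ, W L β h x * F (full L h x)) /
      ∑' x : ↥(intr 0 L) → ℤ, W L β h x := by
  rw [ivExp, ivZ_eq]
  congr 1
  exact ((configEquiv L h).tsum_eq
    fun g : ↥(ivConfigs 0 L h) => ivWeight 0 L β g.1 * F g.1).symm

/-! ### Energy bounds and summability -/

lemma energyI_nonneg (g : V → ℤ) : 0 ≤ energyI 0 L g :=
  Finset.sum_nonneg fun p _ => sq_nonneg _

lemma sq_le_energy (hL : 2 < L) (h : V → ℤ) (x : ↥(intr 0 L) → ℤ) {j : V}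
    (hj : j ∈ intr 0 L) :
    ((full L h x j : ℝ) - (h (j.1, 0) : ℝ)) ^ 2 ≤ (L : ℝ) * energyI 0 L (full L h x) := by
  obtain ⟨hj1, hj2, hj3, hj4⟩ := mem_intr_iff.1 hj
  set c : V → ℤ := full L h x with hc
  set n : ℕ := j.2.toNat with hn
  have hnz : (n : ℤ) = j.2 := Int.toNat_of_nonneg (by omega)
  have hfn : ((j.1 : ℤ), (n : ℤ)) = j := by rw [hnz]
  have htel : ∑ t ∈ Finset.range n, ((c (j.1, (t : ℤ) + 1) : ℝ) - (c (j.1, (t : ℤ)) : ℝ))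
      = (c j : ℝ) - (c (j.1, 0) : ℝ) := by
    have h0 := Finset.sum_range_sub (fun t : ℕ => (c (j.1, (t : ℤ)) : ℝ)) n
    simp only [Nat.cast_add, Nat.cast_one, Nat.cast_zero] at h0 ⊢
    rw [h0, hfn]
  have hcb : c (j.1, 0) = h (j.1, 0) :=
    full_apply_bdry h x (pair_mem_bdry_bot (by omega) (by omega) (by omega))
  have hcs := sq_sum_le_card_mul_sum_sq (s := Finset.range n)
    (f := fun t : ℕ => ((c (j.1, (t : ℤ) + 1) : ℝ) - (c (j.1, (t : ℤ)) : ℝ)))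
  rw [htel, Finset.card_range] at hcs
  have hsub : ∑ t ∈ Finset.range n, ((c (j.1, (t : ℤ) + 1) : ℝ) - (c (j.1, (t : ℤ)) : ℝ)) ^ 2
      ≤ energyI 0 L c := by
    have heq : ∑ t ∈ Finset.range n,
        ((c (j.1, (t : ℤ) + 1) : ℝ) - (c (j.1, (t : ℤ)) : ℝ)) ^ 2
        = ∑ p ∈ (Finset.range n).image
            (fun t : ℕ => (((j.1, (t : ℤ)) : V), ((j.1, (t : ℤ) + 1) : V))),
            ((c p.1 : ℝ) - (c p.2 : ℝ)) ^ 2 := by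
      rw [Finset.sum_image]
      · exact Finset.sum_congr rfl fun t _ => by ring
      · intro s _ t _ hst
        have h2 := congrArg (fun p : V × V => p.1.2) hst
        simp only at h2
        exact_mod_cast h2
    rw [heq, energyI]
    refine Finset.sum_le_sum_of_subset_of_nonneg ?_ (fun p _ _ => sq_nonneg _)
    refine Finset.image_subset_iff.2 fun t ht => ?_
    have htn : (t : ℤ) < (n : ℤ) := by exact_mod_cast Finset.mem_range.1 ht
    exact vert_edge_mem hL hj1 hj2 (by omega) (by omega)
  have hE : 0 ≤ energyI 0 L c := energyI_nonneg c
  have hnL : (n : ℝ) ≤ (L : ℝ) := by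
    have : (n : ℤ) ≤ (L : ℤ) := by omega
    exact_mod_cast this
  calc ((c j : ℝ) - (h (j.1, 0) : ℝ)) ^ 2
      = ((c j : ℝ) - (c (j.1, 0) : ℝ)) ^ 2 := by rw [hcb]
    _ ≤ (n : ℝ) * ∑ t ∈ Finset.range n,
        ((c (j.1, (t : ℤ) + 1) : ℝ) - (c (j.1, (t : ℤ)) : ℝ)) ^ 2 := hcs
    _ ≤ (n : ℝ) * energyI 0 L c := by
        exact mul_le_mul_of_nonneg_left hsub (by positivity)
    _ ≤ (L : ℝ) * energyI 0 L c := mul_le_mul_of_nonneg_right hnL hE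

def eps (L : ℕ) (β : ℝ) : ℝ := β / (2 * (((intr 0 L).card + 1) * L))

lemma eps_pos (hL : 2 < L) (hβ : 0 < β) : 0 < eps L β := by
  have hL0 : (0 : ℝ) < (L : ℝ) := by exact_mod_cast Nat.zero_lt_of_lt hL
  have : (0 : ℝ) < (((intr 0 L).card : ℝ) + 1) := by positivity
  exact div_pos hβ (by positivity)

lemma W_le_prod (hL : 2 < L) (hβ : 0 < β) (h : V → ℤ) (x : ↥(intr 0 L) → ℤ) :
    W L β h x ≤ ∏ j : ↥(intr 0 L),
      Real.exp (-(eps L β * ((x j : ℝ) - (h (j.1.1, 0) : ℝ)) ^ 2)) := by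
  rw [W, ivWeight, ← Real.exp_sum]
  apply Real.exp_le_exp.2
  have hsum : ∑ j : ↥(intr 0 L), -(eps L β * ((x j : ℝ) - (h (j.1.1, 0) : ℝ)) ^ 2)
      = -(eps L β * ∑ j : ↥(intr 0 L), ((x j : ℝ) - (h (j.1.1, 0) : ℝ)) ^ 2) := by
    rw [Finset.mul_sum, ← Finset.sum_neg_distrib]
  rw [hsum, neg_mul, neg_le_neg_iff]
  have hS : ∑ j : ↥(intr 0 L), ((x j : ℝ) - (h (j.1.1, 0) : ℝ)) ^ 2
      ≤ (((intr 0 L).card : ℝ) + 1) * (L : ℝ) * energyI 0 L (full L h x) := by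
    have hE := energyI_nonneg (L := L) (full L h x)
    calc ∑ j : ↥(intr 0 L), ((x j : ℝ) - (h (j.1.1, 0) : ℝ)) ^ 2
        ≤ ∑ _j : ↥(intr 0 L), (L : ℝ) * energyI 0 L (full L h x) := by
          refine Finset.sum_le_sum fun j _ => ?_
          have := sq_le_energy hL h x j.2
          rwa [full_apply_intr h x j.2] at this
      _ = ((intr 0 L).card : ℝ) * ((L : ℝ) * energyI 0 L (full L h x)) := by
          rw [Finset.sum_const, Finset.card_univ, Fintype.card_coe, nsmul_eq_mul]
      _ ≤ (((intr 0 L).card : ℝ) + 1) * (L : ℝ) * energyI 0 L (full L h x) := by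
          nlinarith [mul_nonneg (Nat.cast_nonneg (α := ℝ) L) hE]
  have hL0 : (0 : ℝ) < (L : ℝ) := by exact_mod_cast Nat.zero_lt_of_lt hL
  have hK : (0 : ℝ) < (((intr 0 L).card : ℝ) + 1) * (L : ℝ) := by positivity
  have heps : eps L β * ((((intr 0 L).card : ℝ) + 1) * (L : ℝ)) = β / 2 := by
    rw [eps]
    push_cast
    field_simp
  calc eps L β * ∑ j : ↥(intr 0 L), ((x j : ℝ) - (h (j.1.1, 0) : ℝ)) ^ 2
      ≤ eps L β * ((((intr 0 L).card : ℝ) + 1) * (L : ℝ) * energyI 0 L (full L h x)) :=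
        mul_le_mul_of_nonneg_left hS (eps_pos hL hβ).le
    _ = β / 2 * energyI 0 L (full L h x) := by rw [← heps]; ring

lemma summable_W (hL : 2 < L) (hβ : 0 < β) (h : V → ℤ) : Summable (W L β h) := by
  have hψ : ∀ i : ↥(intr 0 L),
      Summable (fun d : ℤ => Real.exp (-(eps L β * ((d : ℝ) - (h (i.1.1, 0) : ℝ)) ^ 2))) :=
    fun i => summable_exp_neg_sq (eps_pos hL hβ) _
  have hprod := summable_pi_prod
    (fun (i : ↥(intr 0 L)) (d : ℤ) => Real.exp (-(eps L β * ((d : ℝ) - (h (i.1.1, 0) : ℝ)) ^ 2)))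
    (fun i d => (Real.exp_pos _).le) hψ
  exact Summable.of_nonneg_of_le (fun x => (W_pos x).le) (W_le_prod hL hβ h) hprod

lemma tsum_W_pos (hL : 2 < L) (hβ : 0 < β) (h : V → ℤ) :
    0 < ∑' x : ↥(intr 0 L) → ℤ, W L β h x :=
  Summable.tsum_pos (summable_W hL hβ h) (fun x => (W_pos x).le) 0 (W_pos 0)

/-! ### Lattice structure -/

lemma full_sup (hle : ∀ j ∈ bdry 0 L, h₁ j ≤ h₂ j) (a b : ↥(intr 0 L) → ℤ) (j : V) :
    full L h₂ (a ⊔ b) j = max (full L h₂ a j) (full L h₁ b j) := by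
  by_cases hj : j ∈ intr 0 L
  · rw [full_apply_intr h₂ _ hj, full_apply_intr h₂ _ hj, full_apply_intr h₁ _ hj,
      Pi.sup_apply]
  · by_cases hb : j ∈ bdry 0 L
    · rw [full_apply_bdry _ _ hb, full_apply_bdry _ _ hb, full_apply_bdry _ _ hb,
        max_eq_left (hle j hb)]
    · rw [full_apply_out _ _ hj hb, full_apply_out _ _ hj hb, full_apply_out _ _ hj hb,
        max_self]

lemma full_inf (hle : ∀ j ∈ bdry 0 L, h₁ j ≤ h₂ j) (a b : ↥(intr 0 L) → ℤ) (j : V) :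
    full L h₁ (a ⊓ b) j = min (full L h₂ a j) (full L h₁ b j) := by
  by_cases hj : j ∈ intr 0 L
  · rw [full_apply_intr h₁ _ hj, full_apply_intr h₂ _ hj, full_apply_intr h₁ _ hj,
      Pi.inf_apply]
  · by_cases hb : j ∈ bdry 0 L
    · rw [full_apply_bdry _ _ hb, full_apply_bdry _ _ hb, full_apply_bdry _ _ hb,
        min_eq_right (hle j hb)]
    · rw [full_apply_out _ _ hj hb, full_apply_out _ _ hj hb, full_apply_out _ _ hj hb,
        min_self]

lemma energy_lattice (hle : ∀ j ∈ bdry 0 L, h₁ j ≤ h₂ j) (a b : ↥(intr 0 L) → ℤ) :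
    energyI 0 L (full L h₁ (a ⊓ b)) + energyI 0 L (full L h₂ (a ⊔ b))
      ≤ energyI 0 L (full L h₂ a) + energyI 0 L (full L h₁ b) := by
  rw [energyI, energyI, energyI, energyI, ← Finset.sum_add_distrib, ← Finset.sum_add_distrib]
  refine Finset.sum_le_sum fun p _ => ?_
  rw [full_sup hle a b p.1, full_sup hle a b p.2, full_inf hle a b p.1, full_inf hle a b p.2]
  push_cast
  have := quad_max_min ((full L h₂ a p.1 : ℤ) : ℝ) ((full L h₁ b p.1 : ℤ) : ℝ)
    ((full L h₂ a p.2 : ℤ) : ℝ) ((full L h₁ b p.2 : ℤ) : ℝ)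
  linarith

lemma W_lattice (hle : ∀ j ∈ bdry 0 L, h₁ j ≤ h₂ j) (hβ : 0 < β) (a b : ↥(intr 0 L) → ℤ) :
    W L β h₂ a * W L β h₁ b ≤ W L β h₁ (a ⊓ b) * W L β h₂ (a ⊔ b) := by
  rw [W, W, W, W, ivWeight, ivWeight, ivWeight, ivWeight, ← Real.exp_add, ← Real.exp_add]
  apply Real.exp_le_exp.2
  have h0 := energy_lattice hle a b
  have hb2 : (0 : ℝ) ≤ β / 2 := by linarith
  have h1 := mul_le_mul_of_nonneg_left h0 hb2
  nlinarith

end IVAux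

open IVGFF IVAux in
/-- Monotonicity in the boundary condition: if `h₁ ≤ h₂` on `∂Λ` then
`P^IV_{β,Λ,h₁}` is stochastically dominated by `P^IV_{β,Λ,h₂}`. -/
theorem iv_stochastic_domination (L : ℕ) (hL : 2 < L) (β : ℝ) (hβ : 0 < β)
    (h₁ h₂ : IVGFF.V → ℤ) (hle : ∀ j ∈ IVGFF.bdry 0 L, h₁ j ≤ h₂ j)
    (g : (IVGFF.V → ℤ) → ℝ) (hbdd : ∃ C : ℝ, ∀ m, |g m| ≤ C)
    (hmono : ∀ m₁ m₂ : IVGFF.V → ℤ,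
      (∀ j ∈ IVGFF.box 0 L, m₁ j ≤ m₂ j) → g m₁ ≤ g m₂) :
    IVGFF.ivExp 0 L β h₁ g ≤ IVGFF.ivExp 0 L β h₂ g := by
  classical
  obtain ⟨C, hC⟩ := hbdd
  have hC0 : 0 ≤ C := le_trans (abs_nonneg _) (hC 0)
  set G : (V → ℤ) → ℝ := fun m => g m + C with hG
  have hG0 : ∀ m, 0 ≤ G m := fun m => by
    have := (abs_le.1 (hC m)).1; simp only [hG]; linarith
  have hsW₁ : Summable (W L β h₁) := summable_W hL hβ h₁
  have hsW₂ : Summable (W L β h₂) := summable_W hL hβ h₂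
  have hZ₁ : 0 < ∑' x : ↥(intr 0 L) → ℤ, W L β h₁ x := tsum_W_pos hL hβ h₁
  have hZ₂ : 0 < ∑' x : ↥(intr 0 L) → ℤ, W L β h₂ x := tsum_W_pos hL hβ h₂
  have hsg : ∀ h' : V → ℤ,
      Summable (fun x : ↥(intr 0 L) → ℤ => W L β h' x * g (full L h' x)) := by
    intro h'
    refine Summable.of_norm_bounded
      ((summable_W hL hβ h').mul_left C) (fun x => ?_)
    rw [Real.norm_eq_abs, abs_mul, abs_of_nonneg (W_pos x).le]
    calc W L β h' x * |g (full L h' x)| ≤ W L β h' x * C :=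
        mul_le_mul_of_nonneg_left (hC _) (W_pos x).le
      _ = C * W L β h' x := mul_comm _ _
  have hsG : ∀ h' : V → ℤ,
      Summable (fun x : ↥(intr 0 L) → ℤ => W L β h' x * G (full L h' x)) := by
    intro h'
    have heq : (fun x : ↥(intr 0 L) → ℤ => W L β h' x * G (full L h' x))
        = fun x => W L β h' x * g (full L h' x) + C * W L β h' x := by
      funext x; simp only [hG]; ring
    rw [heq]
    exact (hsg h').add ((summable_W hL hβ h').mul_left C)
  have hGsum : ∀ h' : V → ℤ,
      ∑' x : ↥(intr 0 L) → ℤ, W L β h' x * G (full L h' x)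
        = (∑' x : ↥(intr 0 L) → ℤ, W L β h' x * g (full L h' x))
            + C * ∑' x : ↥(intr 0 L) → ℤ, W L β h' x := by
    intro h'
    rw [← tsum_mul_left, ← Summable.tsum_add (hsg h') ((summable_W hL hβ h').mul_left C)]
    exact tsum_congr fun x => by simp only [hG]; ring
  have hcond : ∀ a b : ↥(intr 0 L) → ℤ,
      W L β h₂ a * (W L β h₁ b * G (full L h₁ b))
        ≤ W L β h₁ (a ⊓ b) * (W L β h₂ (a ⊔ b) * G (full L h₂ (a ⊔ b))) := by
    intro a b
    have h1 := W_lattice hle hβ a b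
    have h2 : G (full L h₁ b) ≤ G (full L h₂ (a ⊔ b)) := by
      have hg' : g (full L h₁ b) ≤ g (full L h₂ (a ⊔ b)) := by
        refine hmono _ _ fun j hj => ?_
        by_cases hji : j ∈ intr 0 L
        · rw [full_apply_intr h₁ b hji, full_apply_intr h₂ _ hji, Pi.sup_apply]
          exact le_sup_right
        · have hjb : j ∈ bdry 0 L := by
            by_contra hjb
            exact hji (Finset.mem_sdiff.2 ⟨hj, hjb⟩)
          rw [full_apply_bdry h₁ b hjb, full_apply_bdry h₂ _ hjb]
          exact hle j hjb
      simp only [hG]; linarith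
    calc W L β h₂ a * (W L β h₁ b * G (full L h₁ b))
        = W L β h₂ a * W L β h₁ b * G (full L h₁ b) := by ring
      _ ≤ W L β h₁ (a ⊓ b) * W L β h₂ (a ⊔ b) * G (full L h₂ (a ⊔ b)) :=
          mul_le_mul h1 h2 (hG0 _) (mul_nonneg (W_pos _).le (W_pos _).le)
      _ = _ := by ring
  have key := tsum_four_functions (W L β h₂)
    (fun x : ↥(intr 0 L) → ℤ => W L β h₁ x * G (full L h₁ x)) (W L β h₁)
    (fun x : ↥(intr 0 L) → ℤ => W L β h₂ x * G (full L h₂ x))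
    (fun x => (W_pos x).le) (fun x => mul_nonneg (W_pos x).le (hG0 _))
    (fun x => (W_pos x).le) (fun x => mul_nonneg (W_pos x).le (hG0 _))
    hsW₂ (hsG h₁) hsW₁ (hsG h₂) hcond
  rw [hGsum h₁, hGsum h₂] at key
  rw [ivExp_eq g, ivExp_eq g, div_le_div_iff₀ hZ₁ hZ₂]
  nlinarith [key]
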